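/- Let X ∈ ℝ^{n×q} and Y ∈ ℝ^{n×d} be nonzero matrices with rows x_i and y_i, let γ := ‖X‖_op²/‖Y‖_op², and suppose the positive reals {p_i}_{i∈[n]} satisfy p_i ≥ (1/4)·(‖x_i‖₂² + γ‖y_i‖₂²)/(‖X‖_F² + γ‖Y‖_F²) for all i ∈ [n]. Then in the Loewner (positive semidefinite) order, Σ_{i∈[n]} (‖x_i‖₂²/p_i)·y_iᵀy_i ⪯ 4·(‖X‖_F² + γ‖Y‖_F²)·YᵀY. -/

import Mathlib

/-- The spectral (operator) norm of a real matrix. -/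
noncomputable def opNorm {m n : ℕ} (M : Matrix (Fin m) (Fin n) ℝ) : ℝ :=
  ‖LinearMap.toContinuousLinearMap (Matrix.toEuclideanLin M)‖

/-- The Frobenius norm of a real matrix. -/
noncomputable def frobNorm {m n : ℕ} (M : Matrix (Fin m) (Fin n) ℝ) : ℝ :=
  Real.sqrt (∑ i, ∑ j, (M i j) ^ 2)

lemma psd_smul_vecMulVec {d : ℕ} (c : ℝ) (hc : 0 ≤ c) (v : Fin d → ℝ) :
    (c • Matrix.vecMulVec v v).PosSemidef := by
  refine Matrix.PosSemidef.of_dotProduct_mulVec_nonneg ?_ ?_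
  · ext i j
    simp [Matrix.vecMulVec, Matrix.conjTranspose_apply, mul_comm]
  · intro x
    have h : Matrix.mulVec (c • Matrix.vecMulVec v v) x = fun i => c * (v i * ∑ j, v j * x j) := by
      ext i
      simp [Matrix.mulVec, Matrix.vecMulVec, dotProduct, Finset.mul_sum, mul_assoc]
    rw [h]
    simp only [dotProduct, star_trivial]
    have hS : ∑ i, x i * (c * (v i * ∑ j, v j * x j)) =
        c * ((∑ j, v j * x j) * (∑ j, v j * x j)) := by
      rw [Finset.sum_mul, Finset.mul_sum]
      exact Finset.sum_congr rfl fun i _ => by ring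
    rw [hS]
    exact mul_nonneg hc (mul_self_nonneg _)

lemma psd_sum {ι d : ℕ} {s : Finset (Fin ι)} {f : Fin ι → Matrix (Fin d) (Fin d) ℝ}
    (h : ∀ i ∈ s, (f i).PosSemidef) : (∑ i ∈ s, f i).PosSemidef := by
  classical
  induction s using Finset.induction with
  | empty => simpa using Matrix.PosSemidef.zero
  | insert _ _ hi ih =>
    rw [Finset.sum_insert hi]
    exact (h _ (Finset.mem_insert_self _ _)).add
      (ih fun i his => h i (Finset.mem_insert_of_mem his))

theorem amm_second_moment_loewner {n q d : ℕ}
    (X : Matrix (Fin n) (Fin q) ℝ) (Y : Matrix (Fin n) (Fin d) ℝ)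
    (hX : X ≠ 0) (hY : Y ≠ 0)
    (p : Fin n → ℝ) (hp : ∀ i, 0 < p i)
    (hplb : ∀ i,
      (1 / 4) * (((∑ j, (X i j) ^ 2) +
          (opNorm X ^ 2 / opNorm Y ^ 2) * ∑ j, (Y i j) ^ 2) /
        (frobNorm X ^ 2 + (opNorm X ^ 2 / opNorm Y ^ 2) * frobNorm Y ^ 2)) ≤ p i) :
    Matrix.PosSemidef
      ((4 * (frobNorm X ^ 2 + (opNorm X ^ 2 / opNorm Y ^ 2) * frobNorm Y ^ 2)) •
          (Y.transpose * Y) -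
        ∑ i : Fin n, ((∑ j, (X i j) ^ 2) / p i) • Matrix.vecMulVec (Y i) (Y i)) := by
  classical
  set γ : ℝ := opNorm X ^ 2 / opNorm Y ^ 2 with hγdef
  set C : ℝ := frobNorm X ^ 2 + γ * frobNorm Y ^ 2 with hCdef
  have hγ : 0 ≤ γ := div_nonneg (sq_nonneg _) (sq_nonneg _)
  -- frobNorm X > 0
  have hsum : 0 < ∑ i, ∑ j, (X i j) ^ 2 := by
    obtain ⟨i, j, hij⟩ : ∃ i j, X i j ≠ 0 := by
      by_contra h
      push_neg at h
      exact hX (by ext i j; simp [h i j])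
    have h1 : (0:ℝ) < ∑ j, (X i j) ^ 2 :=
      Finset.sum_pos' (fun _ _ => sq_nonneg _)
        ⟨j, Finset.mem_univ j, by positivity⟩
    exact Finset.sum_pos' (fun _ _ => Finset.sum_nonneg fun _ _ => sq_nonneg _)
      ⟨i, Finset.mem_univ i, h1⟩
  have hFX : 0 < frobNorm X ^ 2 := by
    rw [frobNorm, Real.sq_sqrt hsum.le]; exact hsum
  have hC : 0 < C := by
    have : 0 ≤ γ * frobNorm Y ^ 2 := mul_nonneg hγ (sq_nonneg _)
    linarith
  -- coefficient bound
  have hcoef : ∀ i, (∑ j, (X i j) ^ 2) / p i ≤ 4 * C := by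
    intro i
    rw [div_le_iff₀ (hp i)]
    have h := hplb i
    have h2 : (∑ j, (X i j) ^ 2) + γ * ∑ j, (Y i j) ^ 2 ≤ 4 * C * p i := by
      have hm := mul_le_mul_of_nonneg_left h (by linarith : (0:ℝ) ≤ 4 * C)
      have hkey : (4 * C) * ((1/4) * (((∑ j, (X i j) ^ 2) + γ * ∑ j, (Y i j) ^ 2) / C)) =
          (∑ j, (X i j) ^ 2) + γ * ∑ j, (Y i j) ^ 2 := by
        field_simp
      rw [hkey] at hm
      linarith
    have hYnn : 0 ≤ γ * ∑ j, (Y i j) ^ 2 :=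
      mul_nonneg hγ (Finset.sum_nonneg fun _ _ => sq_nonneg _)
    linarith
  -- rewrite as a sum
  have hYtY : Y.transpose * Y = ∑ i, Matrix.vecMulVec (Y i) (Y i) := by
    ext j k
    simp [Matrix.mul_apply, Matrix.vecMulVec, Matrix.transpose_apply, Matrix.sum_apply]
  have hrw : (4 * C) • (Y.transpose * Y) -
      ∑ i : Fin n, ((∑ j, (X i j) ^ 2) / p i) • Matrix.vecMulVec (Y i) (Y i) =
      ∑ i : Fin n, (4 * C - (∑ j, (X i j) ^ 2) / p i) • Matrix.vecMulVec (Y i) (Y i) := by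
    rw [hYtY, Finset.smul_sum, ← Finset.sum_sub_distrib]
    exact Finset.sum_congr rfl fun i _ => by rw [sub_smul]
  rw [hrw]
  apply psd_sum
  intro i _
  exact psd_smul_vecMulVec _ (by linarith [hcoef i]) _
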